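/- There exists a 2×2-block sequence of matrices demonstrating that the condition limsup_{n→∞} (1/n) log Θ(0,n) > 0 does not imply forward center bunching: with A = diag(e^{−2}, e^{−1}), B = diag(e^{−1/2}, e^{−1}), C = diag(1, e^{3/4}), if the stable blocks along the orbit are A, B, A, A, B, B, A (4×), B (4×), A (8×), B (8×), … and the center block is constantly C, then ‖product of first n stable blocks‖ = e^{−n}, the center product has conorm 1 and norm e^{(3/4)n} (so limsup (1/n)log Θ(0,n) = 1/4 > 0), yet for j = 2^{m+1} + 2^m − 2 and n = 2^m the stable product from time j over n steps is B^n, giving Θ(j, n) = e^{−n/4}, so liminf over such blocks is negative. -/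

import Mathlib

open Filter

/-- Operator norm (on Euclidean space) of a square real matrix. -/
noncomputable def matOpNorm2 (M : Matrix (Fin 2) (Fin 2) ℝ) : ℝ :=
  ‖LinearMap.toContinuousLinearMap (Matrix.toEuclideanLin M)‖

noncomputable def Amat : Matrix (Fin 2) (Fin 2) ℝ :=
  Matrix.diagonal ![Real.exp (-2), Real.exp (-1)]

noncomputable def Bmat : Matrix (Fin 2) (Fin 2) ℝ :=
  Matrix.diagonal ![Real.exp (-(1/2 : ℝ)), Real.exp (-1)]

noncomputable def Cmat : Matrix (Fin 2) (Fin 2) ℝ :=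
  Matrix.diagonal ![1, Real.exp (3/4 : ℝ)]

/-- The stable sequence: consecutive blocks `A` (`2^m` times) then `B` (`2^m` times), for
`m = 0, 1, 2, …`; that is, `A, B, A, A, B, B, A (4×), B (4×), A (8×), B (8×), …`. -/
noncomputable def stblSeq (n : ℕ) : Matrix (Fin 2) (Fin 2) ℝ :=
  if n + 2 - 2 ^ (Nat.log2 (n + 2) - 1 + 1) < 2 ^ (Nat.log2 (n + 2) - 1) then Amat else Bmat

/-- The products `S(j,n) = S_{j+n−1} ⋯ S_j`. -/
noncomputable def matSeqProd (S : ℕ → Matrix (Fin 2) (Fin 2) ℝ) (j : ℕ) :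
    ℕ → Matrix (Fin 2) (Fin 2) ℝ
  | 0 => 1
  | n + 1 => S (j + n) * matSeqProd S j n

/-- `Θ(j,n) = ‖S(j,n)‖⁻¹ · 𝐦(Cⁿ) · ‖Cⁿ‖⁻¹`, with conorm `𝐦(M) = ‖M⁻¹‖⁻¹`. -/
noncomputable def thetaEx (j n : ℕ) : ℝ :=
  (matOpNorm2 (matSeqProd stblSeq j n))⁻¹ * (matOpNorm2 ((Cmat ^ n)⁻¹))⁻¹ *
    (matOpNorm2 (Cmat ^ n))⁻¹

/-! ### auxiliary lemmas -/

lemma euclid_apply_le_norm (y : EuclideanSpace ℝ (Fin 2)) (i : Fin 2) : |y i| ≤ ‖y‖ := by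
  rw [EuclideanSpace.norm_eq, ← Real.sqrt_sq_eq_abs]
  apply Real.sqrt_le_sqrt
  have : (y i)^2 = ‖y i‖^2 := by rw [Real.norm_eq_abs, sq_abs]
  rw [this]
  exact Finset.single_le_sum (f := fun j => ‖y j‖^2) (fun j _ => sq_nonneg _)
    (Finset.mem_univ i)

lemma matOpNorm2_diag (a b : ℝ) (ha : 0 ≤ a) (hb : 0 ≤ b) :
    matOpNorm2 (Matrix.diagonal ![a, b]) = max a b := by
  set d : Fin 2 → ℝ := ![a, b] with hd
  have hT : ∀ (x : EuclideanSpace ℝ (Fin 2)) (i : Fin 2),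
      (LinearMap.toContinuousLinearMap (Matrix.toEuclideanLin (Matrix.diagonal d)) x) i
        = d i * x i := by
    intro x i
    simp only [LinearMap.coe_toContinuousLinearMap', Matrix.toEuclideanLin_apply]
    show Matrix.mulVec (Matrix.diagonal d) (fun j => x j) i = d i * x i
    rw [Matrix.mulVec_diagonal]
  apply le_antisymm
  · apply ContinuousLinearMap.opNorm_le_bound _ (le_max_iff.2 (Or.inl ha))
    intro x
    rw [EuclideanSpace.norm_eq, EuclideanSpace.norm_eq]
    rw [← Real.sqrt_sq (le_max_iff.2 (Or.inl ha)), ← Real.sqrt_mul (sq_nonneg _)]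
    apply Real.sqrt_le_sqrt
    rw [Finset.mul_sum]
    apply Finset.sum_le_sum
    intro i _
    rw [hT]
    have h1 : |d i| ≤ max a b := by
      fin_cases i <;> simp [hd, abs_of_nonneg, ha, hb, le_max_left, le_max_right]
    calc ‖d i * x i‖ ^ 2 = (|d i|)^2 * ‖x i‖^2 := by
          rw [norm_mul, mul_pow, Real.norm_eq_abs]
      _ ≤ (max a b)^2 * ‖x i‖^2 := by
          apply mul_le_mul_of_nonneg_right _ (sq_nonneg _)
          exact pow_le_pow_left₀ (abs_nonneg _) h1 2
  · have key : ∀ i : Fin 2, |d i| ≤ matOpNorm2 (Matrix.diagonal d) := by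
      intro i
      have h2 := (LinearMap.toContinuousLinearMap (Matrix.toEuclideanLin
        (Matrix.diagonal d))).le_opNorm (EuclideanSpace.single i 1)
      rw [EuclideanSpace.norm_single] at h2
      simp only [norm_one, mul_one] at h2
      refine le_trans (le_trans ?_ (euclid_apply_le_norm _ i)) h2
      rw [hT]
      simp
    apply max_le
    · have := key 0; simpa [hd, abs_of_nonneg ha] using this
    · have := key 1; simpa [hd, abs_of_nonneg hb] using this

lemma diag_mul_diag (p q r s : ℝ) :
    Matrix.diagonal ![p, q] * Matrix.diagonal ![r, s] = Matrix.diagonal ![p * r, q * s] := by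
  rw [Matrix.diagonal_mul_diagonal]
  refine congrArg Matrix.diagonal ?_
  funext i; fin_cases i <;> simp

lemma vec_pow (p q : ℝ) (n : ℕ) : (![p, q] ^ n : Fin 2 → ℝ) = ![p ^ n, q ^ n] := by
  funext i; fin_cases i <;> simp

/-- The predicate for an `A` position. -/
def isA (i : ℕ) : Prop :=
  i + 2 - 2 ^ (Nat.log2 (i + 2) - 1 + 1) < 2 ^ (Nat.log2 (i + 2) - 1)

instance : DecidablePred isA := fun _ => Nat.decLt _ _

lemma stblSeq_eq (n : ℕ) : stblSeq n = if isA n then Amat else Bmat := rfl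

lemma log2_eq {L k : ℕ} (h1 : 2 ^ L ≤ k) (h2 : k < 2 ^ (L + 1)) : Nat.log2 k = L := by
  rw [Nat.log2_eq_log_two]
  exact Nat.log_eq_of_pow_le_of_lt_pow h1 h2

lemma log2_facts (i : ℕ) :
    2 ^ Nat.log2 (i + 2) ≤ i + 2 ∧ i + 2 < 2 ^ (Nat.log2 (i + 2) + 1) ∧
      1 ≤ Nat.log2 (i + 2) := by
  rw [Nat.log2_eq_log_two]
  exact ⟨Nat.pow_log_le_self 2 (by omega), Nat.lt_pow_succ_log_self (by norm_num) _,
    Nat.log_pos (by norm_num) (by omega)⟩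

lemma key_shift {i : ℕ} (hB : ¬ isA i) :
    Nat.log2 (i - 2 ^ (Nat.log2 (i + 2) - 1) + 2) = Nat.log2 (i + 2) ∧
    isA (i - 2 ^ (Nat.log2 (i + 2) - 1)) ∧
    (i - 2 ^ (Nat.log2 (i + 2) - 1)) + 2 ^ (Nat.log2 (i + 2) - 1) = i := by
  obtain ⟨h1, h2, hL⟩ := log2_facts i
  set L := Nat.log2 (i + 2) with hLdef
  have hL1 : L - 1 + 1 = L := by omega
  have hpow : 2 ^ L = 2 ^ (L - 1) * 2 := by rw [← pow_succ, hL1]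
  have hpow2 : 2 ^ (L + 1) = 2 ^ L * 2 := pow_succ 2 L
  have hppos : 1 ≤ 2 ^ (L - 1) := Nat.one_le_two_pow
  rw [isA, ← hLdef, hL1] at hB
  push_neg at hB
  -- hB : 2 ^ (L - 1) ≤ i + 2 - 2 ^ L
  have hge : 2 ^ L + 2 ^ (L - 1) ≤ i + 2 := by omega
  set i' := i - 2 ^ (L - 1) with hi'
  have hsum : i' + 2 ^ (L - 1) = i := by omega
  have hk' : i' + 2 = i + 2 - 2 ^ (L - 1) := by omega
  have hk'ge : 2 ^ L ≤ i' + 2 := by omega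
  have hk'lt : i' + 2 < 2 ^ L + 2 ^ (L - 1) := by omega
  have hlog : Nat.log2 (i' + 2) = L := log2_eq hk'ge (by omega)
  refine ⟨hlog, ?_, hsum⟩
  rw [isA, hlog, hL1]
  omega

lemma countB_le_countA (n : ℕ) :
    ((Finset.range n).filter (fun i => ¬ isA i)).card ≤
      ((Finset.range n).filter (fun i => isA i)).card := by
  apply Finset.card_le_card_of_injOn (fun i => i - 2 ^ (Nat.log2 (i + 2) - 1))
  · intro i hi
    simp only [Finset.coe_filter, Set.mem_setOf_eq, Finset.mem_filter, Finset.mem_range] at hi ⊢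
    obtain ⟨hin, hB⟩ := hi
    obtain ⟨_, hA, hsum⟩ := key_shift hB
    have hd : 1 ≤ 2 ^ (Nat.log2 (i + 2) - 1) := Nat.one_le_two_pow
    exact ⟨by omega, hA⟩
  · intro i1 h1 i2 h2 heq
    simp only [Finset.coe_filter, Set.mem_setOf_eq, Finset.mem_range] at h1 h2
    obtain ⟨hl1, _, hs1⟩ := key_shift h1.2
    obtain ⟨hl2, _, hs2⟩ := key_shift h2.2
    simp only at heq
    have hL : Nat.log2 (i1 + 2) = Nat.log2 (i2 + 2) := by rw [← hl1, ← hl2, heq]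
    rw [hL] at hs1 heq
    omega

/-- number of `A`s among positions `0, …, n-1` -/
def cA (n : ℕ) : ℕ := ((Finset.range n).filter (fun i => isA i)).card

lemma cA_le (n : ℕ) : n ≤ 3 * cA n := by
  have h := countB_le_countA n
  have hsplit := Finset.card_filter_add_card_filter_not
    (s := Finset.range n) (p := fun i => isA i)
  simp only [Finset.card_range] at hsplit
  unfold cA
  omega

lemma cA_succ (n : ℕ) : cA (n + 1) = if isA n then cA n + 1 else cA n := by
  unfold cA
  rw [Finset.range_add_one, Finset.filter_insert]
  split
  · rw [Finset.card_insert_of_notMem (by simp)]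
  · rfl

lemma prod0 (n : ℕ) : matSeqProd stblSeq 0 n =
    Matrix.diagonal ![Real.exp (-(3/2 : ℝ) * cA n - (1/2 : ℝ) * n), Real.exp (-(n : ℝ))] := by
  induction n with
  | zero =>
    show (1 : Matrix (Fin 2) (Fin 2) ℝ) = _
    rw [← Matrix.diagonal_one]
    refine congrArg Matrix.diagonal ?_
    funext i
    fin_cases i <;> simp [cA]
  | succ n ih =>
    show stblSeq (0 + n) * matSeqProd stblSeq 0 n = _
    rw [zero_add, ih, stblSeq_eq, cA_succ]
    by_cases h : isA n
    · have h1 : Real.exp (-2) * Real.exp (-(3/2 : ℝ) * (cA n : ℝ) - (1/2 : ℝ) * (n : ℝ))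
          = Real.exp (-(3/2 : ℝ) * ((cA n + 1 : ℕ) : ℝ) - (1/2 : ℝ) * ((n + 1 : ℕ) : ℝ)) := by
        rw [← Real.exp_add, Real.exp_eq_exp]; push_cast; ring
      have h2 : Real.exp (-1) * Real.exp (-(n : ℝ)) = Real.exp (-((n + 1 : ℕ) : ℝ)) := by
        rw [← Real.exp_add, Real.exp_eq_exp]; push_cast; ring
      rw [if_pos h, if_pos h, Amat, diag_mul_diag, h1, h2]
    · have h1 : Real.exp (-(1/2 : ℝ)) * Real.exp (-(3/2 : ℝ) * (cA n : ℝ) - (1/2 : ℝ) * (n : ℝ))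
          = Real.exp (-(3/2 : ℝ) * (cA n : ℝ) - (1/2 : ℝ) * ((n + 1 : ℕ) : ℝ)) := by
        rw [← Real.exp_add, Real.exp_eq_exp]; push_cast; ring
      have h2 : Real.exp (-1) * Real.exp (-(n : ℝ)) = Real.exp (-((n + 1 : ℕ) : ℝ)) := by
        rw [← Real.exp_add, Real.exp_eq_exp]; push_cast; ring
      rw [if_neg h, if_neg h, Bmat, diag_mul_diag, h1, h2]

lemma norm_prod0 (n : ℕ) : matOpNorm2 (matSeqProd stblSeq 0 n) = Real.exp (-(n : ℝ)) := by
  rw [prod0, matOpNorm2_diag _ _ (Real.exp_nonneg _) (Real.exp_nonneg _)]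
  apply max_eq_right
  apply Real.exp_le_exp.2
  have h := cA_le n
  have : (n : ℝ) ≤ 3 * (cA n : ℝ) := by exact_mod_cast h
  linarith

lemma matSeqProd_const (S : ℕ → Matrix (Fin 2) (Fin 2) ℝ) (M : Matrix (Fin 2) (Fin 2) ℝ)
    (j n : ℕ) (h : ∀ i, j ≤ i → i < j + n → S i = M) : matSeqProd S j n = M ^ n := by
  induction n with
  | zero => simp [matSeqProd]
  | succ n ih =>
    show S (j + n) * matSeqProd S j n = _
    rw [ih (fun i h1 h2 => h i h1 (by omega)), h (j + n) (by omega) (by omega), ← pow_succ']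

lemma Cpow (n : ℕ) : Cmat ^ n = Matrix.diagonal ![1, Real.exp ((3/4 : ℝ) * n)] := by
  rw [Cmat, Matrix.diagonal_pow, vec_pow, one_pow, ← Real.exp_nat_mul, mul_comm]

lemma Cpow_inv (n : ℕ) : (Cmat ^ n)⁻¹ = Matrix.diagonal ![1, Real.exp (-((3/4 : ℝ) * n))] := by
  apply Matrix.inv_eq_right_inv
  rw [Cpow, diag_mul_diag, ← Real.exp_add]
  simp only [mul_one, add_neg_cancel, Real.exp_zero]
  rw [show (![1, 1] : Fin 2 → ℝ) = 1 by funext i; fin_cases i <;> simp]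
  exact Matrix.diagonal_one

lemma norm_Cpow (n : ℕ) : matOpNorm2 (Cmat ^ n) = Real.exp ((3/4 : ℝ) * n) := by
  rw [Cpow, matOpNorm2_diag _ _ zero_le_one (Real.exp_nonneg _)]
  apply max_eq_right
  rw [← Real.exp_zero]
  exact Real.exp_le_exp.2 (by positivity)

lemma norm_Cpow_inv (n : ℕ) : matOpNorm2 ((Cmat ^ n)⁻¹) = 1 := by
  rw [Cpow_inv, matOpNorm2_diag _ _ zero_le_one (Real.exp_nonneg _)]
  apply max_eq_left
  rw [← Real.exp_zero]
  exact Real.exp_le_exp.2 (neg_nonpos.2 (by positivity))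

lemma Bpow (n : ℕ) : Bmat ^ n =
    Matrix.diagonal ![Real.exp (-(1/2 : ℝ) * n), Real.exp (-(n : ℝ))] := by
  rw [Bmat, Matrix.diagonal_pow, vec_pow, ← Real.exp_nat_mul, ← Real.exp_nat_mul]
  refine congrArg Matrix.diagonal ?_
  funext i
  fin_cases i <;> · simp only [Real.exp_eq_exp]; ring_nf

lemma stbl_B {m i : ℕ} (h1 : 2 ^ (m + 1) + 2 ^ m - 2 ≤ i) (h2 : i < 2 ^ (m + 2) - 2) :
    stblSeq i = Bmat := by
  have hpm : 1 ≤ 2 ^ m := Nat.one_le_two_pow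
  have e1 : 2 ^ (m + 1) = 2 ^ m * 2 := pow_succ 2 m
  have e2 : 2 ^ (m + 2) = 2 ^ (m + 1) * 2 := by
    rw [show m + 2 = m + 1 + 1 by omega, pow_succ]
  have e3 : 2 ^ (m + 1 + 1) = 2 ^ (m + 1) * 2 := pow_succ 2 (m + 1)
  have hlog : Nat.log2 (i + 2) = m + 1 := log2_eq (by omega) (by omega)
  rw [stblSeq_eq, if_neg]
  rw [isA, hlog]
  simp only [Nat.add_sub_cancel]
  omega

/-- The example showing that `limsup (1/n) log Θ(0,n) > 0` does not imply forward center
bunching: `‖S(0,n)‖ = e^{−n}`, `𝐦(Cⁿ) = 1` and `‖Cⁿ‖ = e^{3n/4}` (so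
`Θ(0,n) = e^{n/4}` and the `limsup` is `1/4 > 0`), yet for `j = 2^{m+1} + 2^m − 2` and
`n = 2^m` the stable product is `Bⁿ` and `Θ(j,n) = e^{−n/4}`, so the `liminf` over these
blocks is negative. -/
theorem not_forward_center_bunched_example :
    (∀ n : ℕ, matOpNorm2 (matSeqProd stblSeq 0 n) = Real.exp (-(n : ℝ))) ∧
    (∀ n : ℕ, (matOpNorm2 ((Cmat ^ n)⁻¹))⁻¹ = 1 ∧
      matOpNorm2 (Cmat ^ n) = Real.exp ((3/4 : ℝ) * n)) ∧
    (∀ n : ℕ, thetaEx 0 n = Real.exp ((1/4 : ℝ) * n)) ∧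
    (∀ m : ℕ, matSeqProd stblSeq (2 ^ (m + 1) + 2 ^ m - 2) (2 ^ m) = Bmat ^ (2 ^ m) ∧
      thetaEx (2 ^ (m + 1) + 2 ^ m - 2) (2 ^ m) = Real.exp (-(1/4 : ℝ) * 2 ^ m)) ∧
    (∀ m : ℕ, (1 / (2 ^ m : ℝ)) *
        Real.log (thetaEx (2 ^ (m + 1) + 2 ^ m - 2) (2 ^ m)) = -(1/4 : ℝ)) := by
  have hBpowprod : ∀ m : ℕ,
      matSeqProd stblSeq (2 ^ (m + 1) + 2 ^ m - 2) (2 ^ m) = Bmat ^ (2 ^ m) := by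
    intro m
    apply matSeqProd_const
    intro i hi1 hi2
    apply stbl_B hi1
    have hpm : 1 ≤ 2 ^ m := Nat.one_le_two_pow
    have e1 : 2 ^ (m + 1) = 2 ^ m * 2 := pow_succ 2 m
    have e2 : 2 ^ (m + 2) = 2 ^ (m + 1) * 2 := by
      rw [show m + 2 = m + 1 + 1 by omega, pow_succ]
    omega
  have htheta4 : ∀ m : ℕ, thetaEx (2 ^ (m + 1) + 2 ^ m - 2) (2 ^ m) =
      Real.exp (-(1/4 : ℝ) * 2 ^ m) := by
    intro m
    rw [thetaEx, hBpowprod m, Bpow, norm_Cpow, norm_Cpow_inv,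
      matOpNorm2_diag _ _ (Real.exp_nonneg _) (Real.exp_nonneg _)]
    have hmax : max (Real.exp (-(1/2 : ℝ) * (2 ^ m : ℕ))) (Real.exp (-((2 ^ m : ℕ) : ℝ)))
        = Real.exp (-(1/2 : ℝ) * (2 ^ m : ℕ)) := by
      apply max_eq_left
      apply Real.exp_le_exp.2
      have : (0 : ℝ) ≤ ((2 ^ m : ℕ) : ℝ) := by positivity
      linarith
    rw [hmax, ← Real.exp_neg, ← Real.exp_neg, inv_one, mul_one, ← Real.exp_add]
    congr 1
    push_cast
    ring
  refine ⟨norm_prod0, fun n => ⟨by rw [norm_Cpow_inv, inv_one], norm_Cpow n⟩, ?_, 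
    fun m => ⟨hBpowprod m, htheta4 m⟩, ?_⟩
  · intro n
    rw [thetaEx, norm_prod0, norm_Cpow, norm_Cpow_inv, inv_one,
      ← Real.exp_neg, ← Real.exp_neg, mul_one, ← Real.exp_add]
    congr 1
    ring
  · intro m
    rw [htheta4 m, Real.log_exp]
    have : (2 : ℝ) ^ m ≠ 0 := by positivity
    field_simp
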